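/- arXiv:1701.02178 — 10 statements merged into one kernel-verified Lean document; each statement's English description precedes it below -/
import Mathlib

section
/- Let A be a finite unital F∞-algebra in which every nonzero element is invertible (a finite division algebra). Then for all a, b ∈ A with a ≠ b, a + b = 0. -/
class FinfModule (M : Type*) extends Zero M, Neg M, Add M where
  add_assoc : ∀ a b c : M, a + b + c = a + (b + c)
  add_comm : ∀ a b : M, a + b = b + a
  add_idem : ∀ a : M, a + a = a
  add_neg : ∀ a : M, a + -a = 0
  neg_add : ∀ a b : M, -(a + b) = -a + -b
  neg_neg : ∀ a : M, - -a = a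

class FinfAlgebra (A : Type*) extends FinfModule A, Mul A where
  mul_assoc : ∀ a b c : A, a * b * c = a * (b * c)
  mul_zero : ∀ a : A, a * 0 = 0
  zero_mul : ∀ a : A, 0 * a = 0
  neg_mul : ∀ a b : A, -a * b = -(a * b)
  mul_neg : ∀ a b : A, a * -b = -(a * b)
  left_distrib : ∀ a b c : A, a * (b + c) = a * b + a * c
  right_distrib : ∀ a b c : A, (a + b) * c = a * c + b * c

class FinfUnitalAlgebra (A : Type*) extends FinfAlgebra A, One A where
  one_mul : ∀ a : A, 1 * a = a
  mul_one : ∀ a : A, a * 1 = a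

namespace FinfAux

variable {A : Type*} [FinfUnitalAlgebra A]

lemma zero_add' (x : A) : 0 + x = 0 := by
  rw [← FinfModule.add_neg x, FinfModule.add_assoc, FinfModule.add_comm (-x) x,
    ← FinfModule.add_assoc, FinfModule.add_idem, FinfModule.add_neg]

def fpow (z : A) : ℕ → A
  | 0 => 1
  | n + 1 => fpow z n * z

lemma fpow_add (z : A) (m n : ℕ) : fpow z (m + n) = fpow z m * fpow z n := by
  induction n with
  | zero => simp [fpow, FinfUnitalAlgebra.mul_one]
  | succ n ih =>
      show fpow z (m + n) * z = fpow z m * (fpow z n * z)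
      rw [ih, FinfAlgebra.mul_assoc]

lemma fpow_succ' (z : A) (n : ℕ) : fpow z (n + 1) = z * fpow z n := by
  have h := fpow_add z 1 n
  rw [Nat.add_comm 1 n] at h
  rw [h]
  show (fpow z 0 * z) * fpow z n = z * fpow z n
  show (1 * z) * fpow z n = z * fpow z n
  rw [FinfUnitalAlgebra.one_mul]

lemma one_add_fpow (z : A) (h : 1 + z = 1) : ∀ n, 1 + fpow z n = 1
  | 0 => FinfModule.add_idem 1
  | n + 1 => by
      have ih := one_add_fpow z h n
      calc 1 + fpow z (n + 1)
          = (1 + fpow z n) + fpow z n * z := by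
            rw [ih]; rfl
        _ = 1 + (fpow z n * 1 + fpow z n * z) := by
            rw [FinfModule.add_assoc, FinfUnitalAlgebra.mul_one]
        _ = 1 + fpow z n * (1 + z) := by rw [FinfAlgebra.left_distrib]
        _ = 1 := by rw [h, FinfUnitalAlgebra.mul_one, ih]

lemma fpow_mul_fpow (z w : A) (h1 : z * w = 1) (h2 : w * z = 1) :
    ∀ n, fpow z n * fpow w n = 1
  | 0 => FinfUnitalAlgebra.one_mul 1
  | n + 1 => by
      have ih := fpow_mul_fpow z w h1 h2 n
      show fpow z n * z * fpow w (n + 1) = 1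
      rw [fpow_succ' w n, FinfAlgebra.mul_assoc, ← FinfAlgebra.mul_assoc z w,
        h1, FinfUnitalAlgebra.one_mul, ih]

lemma eq_one_of_unit_le_one [Finite A] (z w : A) (h1 : z * w = 1) (h2 : w * z = 1)
    (hle : 1 + z = 1) : z = 1 := by
  -- find repeating powers
  obtain ⟨i, j, hij, hfe⟩ := Finite.exists_ne_map_eq_of_infinite (fpow z)
  -- wlog m < n
  have key : ∀ m n : ℕ, m < n → fpow z m = fpow z n → z = 1 := by
    intro m n hmn hfe
    set d := n - m with hd
    have hn : n = m + d := by omega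
    have hd1 : 1 ≤ d := by omega
    have hzd : fpow z d = 1 := by
      have hwz : fpow w m * fpow z m = 1 := fpow_mul_fpow w z h2 h1 m
      calc fpow z d = 1 * fpow z d := (FinfUnitalAlgebra.one_mul _).symm
        _ = (fpow w m * fpow z m) * fpow z d := by rw [hwz]
        _ = fpow w m * (fpow z m * fpow z d) := FinfAlgebra.mul_assoc _ _ _
        _ = fpow w m * fpow z n := by rw [← fpow_add, ← hn]
        _ = fpow w m * fpow z m := by rw [← hfe]
        _ = 1 := hwz
    obtain ⟨e, he⟩ : ∃ e, d = e + 1 := ⟨d - 1, by omega⟩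
    rw [he] at hzd
    have hch : 1 + fpow z e = 1 := one_add_fpow z hle e
    have : z + 1 = z := by
      calc z + 1 = z * 1 + z * fpow z e := by
            rw [FinfUnitalAlgebra.mul_one, ← fpow_succ', hzd]
        _ = z * (1 + fpow z e) := (FinfAlgebra.left_distrib z 1 (fpow z e)).symm
        _ = z := by rw [hch, FinfUnitalAlgebra.mul_one]
    rw [← this, FinfModule.add_comm, hle]
  rcases lt_or_gt_of_ne hij with h | h
  · exact key i j h hfe
  · exact key j i h hfe.symm

end FinfAux

theorem stmt1 {A : Type*} [FinfUnitalAlgebra A] [Finite A]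
    (hdiv : ∀ a : A, a ≠ 0 → ∃ a' : A, a * a' = 1 ∧ a' * a = 1)
    (a b : A) (hab : a ≠ b) : a + b = 0 := by
  by_contra hc
  have ha : a ≠ 0 := by
    rintro rfl
    exact hc (FinfAux.zero_add' b)
  have hb : b ≠ 0 := by
    rintro rfl
    rw [FinfModule.add_comm] at hc
    exact hc (FinfAux.zero_add' a)
  obtain ⟨c', h1, h2⟩ := hdiv (a + b) hc
  set c := a + b with hcdef
  -- x + y = 1
  have hxy : c' * a + c' * b = 1 := by rw [← FinfAlgebra.left_distrib, ← hcdef, h2]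
  have hrecover : ∀ t : A, c * (c' * t) = t := by
    intro t
    rw [← FinfAlgebra.mul_assoc, h1, FinfUnitalAlgebra.one_mul]
  have hx0 : c' * a ≠ 0 := by
    intro h
    apply ha
    rw [← hrecover a, h, FinfAlgebra.mul_zero]
  have hy0 : c' * b ≠ 0 := by
    intro h
    apply hb
    rw [← hrecover b, h, FinfAlgebra.mul_zero]
  -- 1 + x = 1 and 1 + y = 1
  have hlx : 1 + c' * a = 1 := by
    rw [← hxy, FinfModule.add_comm (c' * a) (c' * b), FinfModule.add_assoc,
      FinfModule.add_idem]
  have hly : 1 + c' * b = 1 := by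
    rw [← hxy, FinfModule.add_assoc, FinfModule.add_idem]
  obtain ⟨x', hx1, hx2⟩ := hdiv _ hx0
  obtain ⟨y', hy1, hy2⟩ := hdiv _ hy0
  have hxone : c' * a = 1 := FinfAux.eq_one_of_unit_le_one _ x' hx1 hx2 hlx
  have hyone : c' * b = 1 := FinfAux.eq_one_of_unit_le_one _ y' hy1 hy2 hly
  apply hab
  calc a = c * (c' * a) := (hrecover a).symm
    _ = c * (c' * b) := by rw [hxone, hyone]
    _ = b := hrecover b
end

section
/- Let M be an F∞-module and suppose there is a finite subset G ⊆ M such that every element of M equals the sum Σ_{x∈S} x over some nonempty subset S ⊆ G (M is finitely generated). Then for all a, b ∈ M, if the set of common upper bounds {x ∈ M : a ≤ x and b ≤ x} is nonempty, it has a least element. (That is, the order closure of M is a lattice.) -/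
def nsum {M : Type*} [FinfModule M] : List M → M
  | [] => 0
  | [a] => a
  | a :: b :: l => a + nsum (b :: l)

lemma nsum_mem {M : Type*} [FinfModule M] :
    ∀ (l : List M) (x : M), x ∈ l → nsum l + x = nsum l
  | [], x, hx => by simp at hx
  | [y], x, hx => by
      simp at hx; subst hx; simp [nsum, FinfModule.add_idem]
  | y :: z :: t, x, hx => by
      rcases List.mem_cons.mp hx with h | h
      · subst h
        show (x + nsum (z :: t)) + x = x + nsum (z :: t)
        rw [FinfModule.add_comm x (nsum (z :: t)), FinfModule.add_assoc,
          FinfModule.add_idem]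
      · have ih := nsum_mem (z :: t) x h
        show (y + nsum (z :: t)) + x = y + nsum (z :: t)
        rw [FinfModule.add_assoc, ih]

lemma nsum_ub {M : Type*} [FinfModule M] :
    ∀ (l : List M) (a : M), l ≠ [] → (∀ x ∈ l, a + x = a) → a + nsum l = a
  | [], a, h, _ => absurd rfl h
  | [y], a, _, h => by simpa [nsum] using h y (by simp)
  | y :: z :: t, a, _, h => by
      have ih := nsum_ub (z :: t) a (by simp)
        (fun x hx => h x (List.mem_cons_of_mem _ hx))
      show a + (y + nsum (z :: t)) = a
      rw [← FinfModule.add_assoc, h y (by simp), ih]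

theorem stmt2 {M : Type*} [FinfModule M] (G : Finset M)
    (hgen : ∀ m : M, ∃ S : Finset M, S.Nonempty ∧ S ⊆ G ∧ nsum S.toList = m)
    (a b : M) (hne : ∃ x : M, a + x = a ∧ b + x = b) :
    ∃ c : M, (a + c = a ∧ b + c = b) ∧
      ∀ x : M, a + x = a → b + x = b → c + x = c := by
  classical
  set U : Finset M :=
    (G.powerset.image (fun S => nsum S.toList)).filter
      (fun x => a + x = a ∧ b + x = b) with hU
  have hmemU : ∀ x : M, x ∈ U ↔ (a + x = a ∧ b + x = b) := by
    intro x
    constructor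
    · intro hx
      exact (Finset.mem_filter.mp hx).2
    · intro hx
      refine Finset.mem_filter.mpr ⟨?_, hx⟩
      obtain ⟨S, _, hSG, hS⟩ := hgen x
      exact Finset.mem_image.mpr ⟨S, Finset.mem_powerset.mpr hSG, hS⟩
  obtain ⟨x₀, hx₀⟩ := hne
  have hx₀U : x₀ ∈ U := (hmemU x₀).mpr hx₀
  have hlne : U.toList ≠ [] := by
    intro h
    have : x₀ ∈ U.toList := Finset.mem_toList.mpr hx₀U
    simp [h] at this
  refine ⟨nsum U.toList, ⟨?_, ?_⟩, ?_⟩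
  · exact nsum_ub U.toList a hlne
      (fun x hx => ((hmemU x).mp (Finset.mem_toList.mp hx)).1)
  · exact nsum_ub U.toList b hlne
      (fun x hx => ((hmemU x).mp (Finset.mem_toList.mp hx)).2)
  · intro x h1 h2
    exact nsum_mem U.toList x (Finset.mem_toList.mpr ((hmemU x).mpr ⟨h1, h2⟩))
end

section
/- Let M be an F∞-module and I an ideal of M. Then there exists a congruence C on M whose kernel is I and which contains every congruence on M whose kernel is I; that is, among all congruences with kernel I there is a greatest one. -/
structure FinfModCong (M : Type*) [FinfModule M] where
  rel : M → M → Prop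
  refl : ∀ a : M, rel a a
  symm : ∀ {a b : M}, rel a b → rel b a
  trans : ∀ {a b c : M}, rel a b → rel b c → rel a c
  add_compat : ∀ {a b : M} (c : M), rel a b → rel (a + c) (b + c)
  neg_compat : ∀ {a b : M}, rel a b → rel (-a) (-b)

theorem stmt4 {M : Type*} [FinfModule M] (I : Set M)
    (h0 : (0 : M) ∈ I) (hneg : ∀ a ∈ I, -a ∈ I)
    (hadd : ∀ a ∈ I, ∀ m : M, a + m ∈ I) :
    ∃ C : FinfModCong M, (∀ a : M, C.rel a 0 ↔ a ∈ I) ∧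
      ∀ D : FinfModCong M, (∀ a : M, D.rel a 0 ↔ a ∈ I) →
        ∀ a b : M, D.rel a b → C.rel a b := by
  classical
  refine ⟨{
    rel := fun a b => (∀ c : M, a + c ∈ I ↔ b + c ∈ I) ∧
      (∀ c : M, -a + c ∈ I ↔ -b + c ∈ I) ∧ (a ∈ I ↔ b ∈ I) ∧ (-a ∈ I ↔ -b ∈ I)
    refl := fun a => ⟨fun _ => Iff.rfl, fun _ => Iff.rfl, Iff.rfl, Iff.rfl⟩
    symm := fun ⟨h1, h2, h3, h4⟩ =>
      ⟨fun c => (h1 c).symm, fun c => (h2 c).symm, h3.symm, h4.symm⟩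
    trans := fun ⟨h1, h2, h3, h4⟩ ⟨g1, g2, g3, g4⟩ =>
      ⟨fun c => (h1 c).trans (g1 c), fun c => (h2 c).trans (g2 c),
        h3.trans g3, h4.trans g4⟩
    add_compat := by
      rintro a b c ⟨h1, h2, h3, h4⟩
      refine ⟨fun d => ?_, fun d => ?_, h1 c, ?_⟩
      · rw [FinfModule.add_assoc, FinfModule.add_assoc]; exact h1 (c + d)
      · rw [FinfModule.neg_add, FinfModule.neg_add, FinfModule.add_assoc,
          FinfModule.add_assoc]
        exact h2 (-c + d)
      · rw [FinfModule.neg_add, FinfModule.neg_add]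
        exact h2 (-c)
    neg_compat := by
      rintro a b ⟨h1, h2, h3, h4⟩
      refine ⟨h2, fun c => ?_, h4, ?_⟩
      · rw [FinfModule.neg_neg, FinfModule.neg_neg]; exact h1 c
      · rw [FinfModule.neg_neg, FinfModule.neg_neg]; exact h3
  }, ?_, ?_⟩
  · intro a
    constructor
    · rintro ⟨h1, h2, h3, h4⟩
      exact h3.mpr h0
    · intro ha
      refine ⟨fun c => ?_, fun c => ?_, ?_, ?_⟩
      · simp only [iff_true_intro (hadd a ha c), iff_true_intro (hadd 0 h0 c)]
      · simp only [iff_true_intro (hadd _ (hneg a ha) c),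
          iff_true_intro (hadd _ (hneg 0 h0) c)]
      · simp only [iff_true_intro ha, iff_true_intro h0]
      · simp only [iff_true_intro (hneg a ha), iff_true_intro (hneg 0 h0)]
  · intro D hD a b hab
    have key : ∀ x y : M, D.rel x y → (x ∈ I ↔ y ∈ I) := by
      intro x y hxy
      constructor
      · intro hx
        exact (hD y).mp (D.trans (D.symm hxy) ((hD x).mpr hx))
      · intro hy
        exact (hD x).mp (D.trans hxy ((hD y).mpr hy))
    exact ⟨fun c => key _ _ (D.add_compat c hab),
      fun c => key _ _ (D.add_compat c (D.neg_compat hab)),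
      key _ _ hab, key _ _ (D.neg_compat hab)⟩
end

section
/- Let F be an F∞-field and define C = {(a,b) ∈ F × F : a ≠ 0, b ≠ 0, and a + b ≠ 0} ∪ {(0,0)}. Then C is a congruence on F, and moreover every proper congruence on F is contained in C (so C is the unique maximal proper congruence on F). -/
class FinfCommAlgebra (A : Type*) extends FinfUnitalAlgebra A where
  mul_comm : ∀ a b : A, a * b = b * a

structure FinfCong (A : Type*) [FinfAlgebra A] extends FinfModCong A where
  mul_compat : ∀ {a b : A} (c : A), rel a b → rel (a * c) (b * c)

section Aux
variable {F : Type*} [FinfCommAlgebra F]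

open FinfModule FinfAlgebra

local notation "Aassoc" => FinfModule.add_assoc
local notation "Acomm" => FinfModule.add_comm

lemma finf_zero_add (x : F) : (0:F) + x = 0 := by
  conv_lhs => rw [← FinfModule.add_neg x]
  rw [FinfModule.add_comm x (-x), FinfModule.add_assoc, FinfModule.add_idem,
    FinfModule.add_comm (-x) x, FinfModule.add_neg]

lemma finf_add_zero (x : F) : x + (0:F) = 0 := by
  rw [FinfModule.add_comm, finf_zero_add]

lemma finf_neg_zero : -(0:F) = 0 := by
  rw [← FinfModule.add_neg (0:F), FinfModule.neg_add, FinfModule.neg_neg,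
    FinfModule.add_comm, FinfModule.add_neg]

lemma finf_neg_eq_zero {a : F} (h : -a = 0) : a = 0 := by
  rw [← FinfModule.neg_neg a, h, finf_neg_zero]

lemma finf_nzd (hF : ∀ a : F, a ≠ 0 → ∃ b : F, a * b = 1)
    {a b : F} (ha : a ≠ 0) (hb : b ≠ 0) : a * b ≠ 0 := by
  intro h
  obtain ⟨a', ha'⟩ := hF a ha
  apply hb
  have h1 : a' * (a * b) = b := by
    rw [← FinfAlgebra.mul_assoc, FinfCommAlgebra.mul_comm a' a, ha',
      FinfUnitalAlgebra.one_mul]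
  rw [← h1, h, FinfAlgebra.mul_zero]

lemma finf_key (hF : ∀ a : F, a ≠ 0 → ∃ b : F, a * b = 1)
    {a b c : F} (ha : a ≠ 0) (hb : b ≠ 0) (hc : c ≠ 0)
    (hab : a + b ≠ 0) (hbc : b + c ≠ 0) : a + c ≠ 0 := by
  intro hac
  have hxy : (a + b) + (b + c) = 0 := by
    rw [FinfModule.add_assoc a b (b + c), ← FinfModule.add_assoc b b c,
      FinfModule.add_idem, FinfModule.add_comm b c, ← FinfModule.add_assoc a c b,
      hac, finf_zero_add]
  have hzero : (b + c) * (a + b) = 0 := by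
    calc (b + c) * (a + b) = (b + (b + c)) * (a + b) := by
          rw [← FinfModule.add_assoc, FinfModule.add_idem]
    _ = b * (a + b) + (b + c) * (a + b) := FinfAlgebra.right_distrib _ _ _
    _ = b * (a + b) + (a * (b + c) + b * (b + c)) := by
          rw [FinfCommAlgebra.mul_comm (b + c) (a + b), FinfAlgebra.right_distrib]
    _ = a * (b + c) + (b * (a + b) + b * (b + c)) := by
          rw [← FinfModule.add_assoc, FinfModule.add_comm (b * (a + b)) (a * (b + c)),
            FinfModule.add_assoc]
    _ = a * (b + c) + b * ((a + b) + (b + c)) := by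
          rw [FinfAlgebra.left_distrib b (a + b) (b + c)]
    _ = a * (b + c) + 0 := by rw [hxy, FinfAlgebra.mul_zero]
    _ = 0 := finf_add_zero _
  exact finf_nzd hF hbc hab hzero

lemma finf_sum_eq {a b c : F} : (a + c) + (b + c) = c + (a + b) := by
  rw [FinfModule.add_assoc a c (b + c), FinfModule.add_comm b c,
    ← FinfModule.add_assoc c c b, FinfModule.add_idem,
    FinfModule.add_comm a (c + b), FinfModule.add_assoc c b a,
    FinfModule.add_comm b a]

end Aux

theorem stmt7 {F : Type*} [FinfCommAlgebra F]
    (hF : ∀ a : F, a ≠ 0 → ∃ b : F, a * b = 1) :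
    ∃ C : FinfCong F,
      (∀ a b : F, C.rel a b ↔ ((a ≠ 0 ∧ b ≠ 0 ∧ a + b ≠ 0) ∨ (a = 0 ∧ b = 0))) ∧
      ∀ D : FinfCong F, (∃ x y : F, ¬ D.rel x y) →
        ∀ a b : F, D.rel a b → C.rel a b := by
  refine ⟨⟨⟨fun a b => (a ≠ 0 ∧ b ≠ 0 ∧ a + b ≠ 0) ∨ (a = 0 ∧ b = 0),
    ?_, ?_, ?_, ?_, ?_⟩, ?_⟩, fun _ _ => Iff.rfl, ?_⟩
  · -- refl
    intro a
    rcases eq_or_ne a 0 with h | h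
    · exact Or.inr ⟨h, h⟩
    · exact Or.inl ⟨h, h, by rw [FinfModule.add_idem]; exact h⟩
  · -- symm
    rintro a b (⟨ha, hb, hab⟩ | ⟨ha, hb⟩)
    · exact Or.inl ⟨hb, ha, by rwa [FinfModule.add_comm]⟩
    · exact Or.inr ⟨hb, ha⟩
  · -- trans
    rintro a b c (⟨ha, hb, hab⟩ | ⟨ha, hb⟩) (⟨hb', hc, hbc⟩ | ⟨hb', hc⟩)
    · exact Or.inl ⟨ha, hc, finf_key hF ha hb hc hab hbc⟩
    · exact absurd hb' hb
    · exact absurd hb hb'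
    · exact Or.inr ⟨ha, hc⟩
  · -- add_compat
    rintro a b c (⟨ha, hb, hab⟩ | ⟨ha, hb⟩)
    · rcases eq_or_ne c 0 with hc | hc
      · subst hc
        exact Or.inr ⟨finf_add_zero a, finf_add_zero b⟩
      rcases eq_or_ne (a + c) 0 with hac | hac
      · rcases eq_or_ne (b + c) 0 with hbc | hbc
        · exact Or.inr ⟨hac, hbc⟩
        · exact absurd hac (finf_key hF ha hb hc hab hbc)
      rcases eq_or_ne (b + c) 0 with hbc | hbc
      · exact absurd hbc
          (finf_key hF hb ha hc (by rwa [FinfModule.add_comm]) hac)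
      refine Or.inl ⟨hac, hbc, ?_⟩
      rw [finf_sum_eq]
      exact finf_key hF hc ha hab (by rwa [FinfModule.add_comm])
        (by rw [← FinfModule.add_assoc a a b, FinfModule.add_idem]; exact hab)
    · subst ha; subst hb
      exact Or.inr ⟨finf_zero_add c, finf_zero_add c⟩
  · -- neg_compat
    rintro a b (⟨ha, hb, hab⟩ | ⟨ha, hb⟩)
    · refine Or.inl ⟨fun h => ha (finf_neg_eq_zero h),
        fun h => hb (finf_neg_eq_zero h), fun h => hab ?_⟩
      rw [← FinfModule.neg_add] at h
      exact finf_neg_eq_zero h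
    · exact Or.inr ⟨by rw [ha, finf_neg_zero], by rw [hb, finf_neg_zero]⟩
  · -- mul_compat
    rintro a b c (⟨ha, hb, hab⟩ | ⟨ha, hb⟩)
    · rcases eq_or_ne c 0 with hc | hc
      · subst hc
        exact Or.inr ⟨FinfAlgebra.mul_zero a, FinfAlgebra.mul_zero b⟩
      · refine Or.inl ⟨finf_nzd hF ha hc, finf_nzd hF hb hc, ?_⟩
        rw [← FinfAlgebra.right_distrib]
        exact finf_nzd hF hab hc
    · exact Or.inr ⟨by rw [ha, FinfAlgebra.zero_mul],
        by rw [hb, FinfAlgebra.zero_mul]⟩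
  · -- maximality
    rintro D ⟨x, y, hxy⟩ a b hab
    -- key sublemma: if D.rel 0 z with z ≠ 0 then D is total
    have total : ∀ z : F, z ≠ 0 → D.rel 0 z → False := by
      intro z hz h0z
      have hall : ∀ w : F, D.rel 0 w := by
        intro w
        obtain ⟨z', hz'⟩ := hF z hz
        have h := D.mul_compat (z' * w) h0z
        rwa [FinfAlgebra.zero_mul, ← FinfAlgebra.mul_assoc, hz',
          FinfUnitalAlgebra.one_mul] at h
      exact hxy (D.trans (D.symm (hall x)) (hall y))
    by_contra hC
    rcases eq_or_ne a 0 with ha | ha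
    · rcases eq_or_ne b 0 with hb | hb
      · exact hC (Or.inr ⟨ha, hb⟩)
      · subst ha
        exact total b hb hab
    · rcases eq_or_ne b 0 with hb | hb
      · subst hb
        exact total a ha (D.symm hab)
      · rcases eq_or_ne (a + b) 0 with hs | hs
        · have h := D.add_compat a hab
          rw [FinfModule.add_idem, FinfModule.add_comm b a, hs] at h
          exact total a ha (D.symm h)
        · exact hC (Or.inl ⟨ha, hb, hs⟩)
end

section
/- Let A be a unital commutative F∞-algebra and C a prime congruence on A. Then for every a, b ∈ A, at least one of the following holds: (a+b, a) ∈ C, or (a+b, b) ∈ C, or (a+b, 0) ∈ C. (In other words, in A/C any two elements a, b satisfy a ≥ b, a ≤ b, or a + b = 0.) -/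
def FinfProper {A : Type*} [FinfAlgebra A] (C : FinfCong A) : Prop :=
  ∃ a b : A, ¬ C.rel a b

def FinfPrime {A : Type*} [FinfAlgebra A] (C : FinfCong A) : Prop :=
  FinfProper C ∧
  (∀ a b c d : A, C.rel (a * c + b * d) (a * d + b * c) →
      C.rel a b ∨ C.rel c d ∨ C.rel (a * c + b * d) 0 ∨ C.rel (a * d + b * c) 0) ∧
  (∀ a b c : A, C.rel (a * c) (b * c) → C.rel a b ∨ C.rel c 0)

theorem stmt9 {A : Type*} [FinfCommAlgebra A] (C : FinfCong A) (hC : FinfPrime C)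
    (a b : A) : C.rel (a + b) a ∨ C.rel (a + b) b ∨ C.rel (a + b) 0 := by
  have assoc : Std.Associative (α := A) (· + ·) := ⟨FinfModule.add_assoc⟩
  have comm : Std.Commutative (α := A) (· + ·) := ⟨FinfModule.add_comm⟩
  have dup : ∀ x y : A, x + y + y = x + y := by
    intro x y; rw [FinfModule.add_assoc, FinfModule.add_idem]
  have e1 : (a+b)*(a+b) + a*b = (a+b)*(a+b) := by
    have step1 : (a+b)*(a+b) + a*b = (((a+b)*a + b*b) + a*b) + a*b := by
      simp only [FinfAlgebra.left_distrib, FinfAlgebra.right_distrib]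
      ac_rfl
    have step2 : ((a+b)*a + b*b) + a*b = (a+b)*(a+b) := by
      simp only [FinfAlgebra.left_distrib, FinfAlgebra.right_distrib]
      rw [FinfCommAlgebra.mul_comm b a]
      ac_rfl
    rw [step1, dup, step2]
  have e2 : (a+b)*b + a*(a+b) = (a+b)*(a+b) := by
    simp only [FinfAlgebra.left_distrib, FinfAlgebra.right_distrib]
    rw [FinfCommAlgebra.mul_comm b a]
    ac_rfl
  have key : (a+b)*(a+b) + a*b = (a+b)*b + a*(a+b) := e1.trans e2.symm
  have sq : C.rel ((a+b)*(a+b)) 0 → C.rel (a+b) 0 := by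
    intro h
    have h0 : C.rel ((a+b)*(a+b)) (0*(a+b)) := by
      rw [FinfAlgebra.zero_mul]; exact h
    rcases hC.2.2 (a+b) 0 (a+b) h0 with h1 | h1 <;> exact h1
  rcases hC.2.1 (a+b) a (a+b) b (by rw [key]; exact C.refl _) with h | h | h | h
  · exact Or.inl h
  · exact Or.inr (Or.inl h)
  · rw [e1] at h
    exact Or.inr (Or.inr (sq h))
  · rw [← key, e1] at h
    exact Or.inr (Or.inr (sq h))
end

section
/- Let A be a unital commutative F∞-algebra, C a prime congruence on A, and a, b, c, d ∈ A such that a > b and c > d in A/C, i.e. (a+b, b) ∈ C with (a,b) ∉ C, and (c+d, d) ∈ C with (c,d) ∉ C. Then either ac > bd in A/C (i.e. (ac+bd, bd) ∈ C and (ac, bd) ∉ C), or (ac, 0) ∈ C. -/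
theorem stmt10 {A : Type*} [FinfCommAlgebra A] (C : FinfCong A) (hC : FinfPrime C)
    (a b c d : A)
    (hab : C.rel (a + b) b) (hab' : ¬ C.rel a b)
    (hcd : C.rel (c + d) d) (hcd' : ¬ C.rel c d) :
    (C.rel (a * c + b * d) (b * d) ∧ ¬ C.rel (a * c) (b * d)) ∨
      C.rel (a * c) 0 := by
  classical
  have rd := FinfAlgebra.right_distrib (A := A)
  have mc := FinfCommAlgebra.mul_comm (A := A)
  have aC := FinfModule.add_comm (M := A)
  have aA := FinfModule.add_assoc (M := A)
  -- key product inequalities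
  have keyA : C.rel (a * c + b * c) (b * c) := by
    have := C.mul_compat c hab; rwa [rd] at this
  have keyB : C.rel (b * c + b * d) (b * d) := by
    have := C.mul_compat b hcd; rwa [rd, mc c b, mc d b] at this
  have keyC : C.rel (a * c + a * d) (a * d) := by
    have := C.mul_compat a hcd; rwa [rd, mc c a, mc d a] at this
  have keyD : C.rel (a * d + b * d) (b * d) := by
    have := C.mul_compat d hab; rwa [rd] at this
  -- ac + bd ~ bd
  have main1 : C.rel (a * c + b * d) (b * d) := by
    have h1 : C.rel (a * c + b * d) (a * c + (b * c + b * d)) := by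
      have := C.add_compat (a * c) (C.symm keyB)
      rwa [aC (b * d) (a * c), aC (b * c + b * d) (a * c)] at this
    have h2 : C.rel (a * c + (b * c + b * d)) (b * c + b * d) := by
      have := C.add_compat (b * d) keyA
      rwa [aA] at this
    exact C.trans h1 (C.trans h2 keyB)
  by_cases h0 : C.rel (a * c) 0
  · exact Or.inr h0
  · refine Or.inl ⟨main1, fun h => h0 ?_⟩
    -- from ac ~ bd derive ad ~ ac and bc ~ ac
    have had : C.rel (a * d) (a * c) := by
      have h1 : C.rel (a * d + a * c) (a * d + b * d) := by
        have := C.add_compat (a * d) h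
        rwa [aC (a * c) (a * d), aC (b * d) (a * d)] at this
      have h2 : C.rel (a * d + a * c) (a * c) :=
        C.trans h1 (C.trans keyD (C.symm h))
      have h3 : C.rel (a * d) (a * d + a * c) := by
        have := C.symm keyC
        rwa [aC (a * c) (a * d)] at this
      exact C.trans h3 h2
    have hbc : C.rel (b * c) (a * c) := by
      have h1 : C.rel (b * c + a * c) (b * c + b * d) := by
        have := C.add_compat (b * c) h
        rwa [aC (a * c) (b * c), aC (b * d) (b * c)] at this
      have h2 : C.rel (b * c + a * c) (a * c) :=
        C.trans h1 (C.trans keyB (C.symm h))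
      have h3 : C.rel (b * c) (b * c + a * c) := by
        have := C.symm keyA
        rwa [aC (a * c) (b * c)] at this
      exact C.trans h3 h2
    have hl : C.rel (a * c + b * d) (a * c) := by
      have := C.add_compat (a * c) (C.symm h)
      rw [aC (b * d) (a * c), aC (a * c) (a * c)] at this
      rwa [FinfModule.add_idem (a * c)] at this
    have hr : C.rel (a * d + b * c) (a * c) := by
      have h1 : C.rel (a * d + b * c) (a * c + b * c) := by
        have := C.add_compat (b * c) had
        exact this
      have h2 : C.rel (a * c + b * c) (a * c + a * c) := by
        have := C.add_compat (a * c) hbc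
        rwa [aC (b * c) (a * c), aC (a * c) (a * c)] at this
      rw [FinfModule.add_idem (a * c)] at h2
      exact C.trans h1 h2
    have hrel : C.rel (a * c + b * d) (a * d + b * c) :=
      C.trans hl (C.symm hr)
    rcases hC.2.1 a b c d hrel with h1 | h2 | h3 | h4
    · exact absurd h1 hab'
    · exact absurd h2 hcd'
    · exact C.trans (C.symm hl) h3
    · exact C.trans (C.symm hr) h4
end

section
/- Let A be a unital commutative F∞-algebra, C a prime congruence on A, and n ≥ 1 an integer. If (aⁿ, bⁿ) ∈ C for some a, b ∈ A with (a, b) ∉ C, then (a + b, 0) ∈ C. -/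
def apow {A : Type*} [FinfAlgebra A] (a : A) : ℕ → A
  | 0 => a
  | 1 => a
  | n + 2 => a * apow a (n + 1)

section Aux

variable {A : Type*} [FinfCommAlgebra A]

lemma apow_one' (a : A) : apow a 1 = a := rfl

lemma apow_succ' (a : A) (k : ℕ) : apow a (k + 2) = a * apow a (k + 1) := rfl

/-- `Tseq a b k = Σ_{i=0}^{k} aⁱ b^{k-i}` -/
def Tseq (a b : A) : ℕ → A
  | 0 => 1
  | k + 1 => a * Tseq a b k + apow b (k + 1)

lemma mulT_b (a b : A) (k : ℕ) :
    b * Tseq a b (k + 1) = a * (b * Tseq a b k) + apow b (k + 2) := by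
  show b * (a * Tseq a b k + apow b (k + 1)) = _
  rw [FinfAlgebra.left_distrib, apow_succ' b k]
  have h1 : b * (a * Tseq a b k) = a * (b * Tseq a b k) := by
    rw [← FinfAlgebra.mul_assoc, ← FinfAlgebra.mul_assoc, FinfCommAlgebra.mul_comm b a]
  rw [h1]

lemma Tseq_alt (a b : A) : ∀ k : ℕ, Tseq a b (k + 1) = apow a (k + 1) + b * Tseq a b k
  | 0 => by
      show a * (1 : A) + apow b 1 = apow a 1 + b * 1
      rw [FinfUnitalAlgebra.mul_one, FinfUnitalAlgebra.mul_one, apow_one', apow_one']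
  | (k + 1) => by
      show a * Tseq a b (k + 1) + apow b (k + 2) = apow a (k + 2) + b * Tseq a b (k + 1)
      conv_lhs => rw [Tseq_alt a b k]
      rw [FinfAlgebra.left_distrib, apow_succ' a k, FinfModule.add_assoc, mulT_b a b k]

lemma mulT_a (a b : A) (k : ℕ) :
    a * Tseq a b (k + 1) = apow a (k + 2) + a * (b * Tseq a b k) := by
  rw [Tseq_alt a b k, FinfAlgebra.left_distrib, apow_succ' a k]

lemma addT (a b : A) : ∀ k : ℕ, (a + b) * Tseq a b k = Tseq a b (k + 1)
  | 0 => by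
      show (a + b) * 1 = a * 1 + apow b 1
      rw [FinfUnitalAlgebra.mul_one, FinfUnitalAlgebra.mul_one, apow_one']
  | (k + 1) => by
      rw [FinfAlgebra.right_distrib, mulT_a a b k, mulT_b a b k]
      set m := a * (b * Tseq a b k) with hm
      have : apow a (k + 2) + m + (m + apow b (k + 2))
          = apow a (k + 2) + (m + apow b (k + 2)) := by
        rw [FinfModule.add_assoc, ← FinfModule.add_assoc m m, FinfModule.add_idem]
      rw [this, ← mulT_b a b k]
      exact (Tseq_alt a b (k + 1)).symm

lemma Tzero (C : FinfCong A) (hC : FinfPrime C) (a b : A) :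
    ∀ k : ℕ, C.rel (Tseq a b k) 0 → C.rel (a + b) 0
  | 0 => by
      intro h0
      have h1 : C.rel (1 * (a + b)) (0 * (a + b)) := C.mul_compat (a + b) h0
      rwa [FinfUnitalAlgebra.one_mul, FinfAlgebra.zero_mul] at h1
  | (k + 1) => by
      intro h0
      have h1 : C.rel ((a + b) * Tseq a b k) (0 * Tseq a b k) := by
        rw [addT a b k, FinfAlgebra.zero_mul]; exact h0
      rcases hC.2.2 (a + b) 0 (Tseq a b k) h1 with h2 | h2
      · exact h2
      · exact Tzero C hC a b k h2

end Aux

theorem stmt11 {A : Type*} [FinfCommAlgebra A] (C : FinfCong A) (hC : FinfPrime C)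
    (a b : A) (n : ℕ) (hn : 1 ≤ n) (h : C.rel (apow a n) (apow b n))
    (hab : ¬ C.rel a b) : C.rel (a + b) 0 := by
  match n, hn with
  | 1, _ => exact absurd h hab
  | (k + 2), _ =>
    have h1 : C.rel (apow a (k + 2) + a * (b * Tseq a b k))
        (apow b (k + 2) + a * (b * Tseq a b k)) :=
      C.add_compat _ h
    have h2 : C.rel (a * Tseq a b (k + 1)) (b * Tseq a b (k + 1)) := by
      rw [mulT_a a b k, mulT_b a b k]
      rw [FinfModule.add_comm (a * (b * Tseq a b k)) (apow b (k + 2))]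
      exact h1
    rcases hC.2.2 a b (Tseq a b (k + 1)) h2 with h3 | h3
    · exact absurd h3 hab
    · exact Tzero C hC a b (k + 1) h3
end

section
/- Let A be a unital commutative F∞-algebra, x ∈ A, C a congruence on A, and n > m ≥ 1 integers such that (1 + xⁿ, 1) ∈ C and (1 + xᵐ, 1) ∈ C. Then (1 + x^{n+m}, 1) ∈ C. Moreover, if C is prime, then also (1 + x^{n−m}, 1) ∈ C. -/
section Aux

variable {A : Type*} [FinfCommAlgebra A]

instance finfCommMonoid : CommMonoid A where
  mul := (· * ·)
  one := 1
  mul_assoc := FinfAlgebra.mul_assoc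
  one_mul := FinfUnitalAlgebra.one_mul
  mul_one := FinfUnitalAlgebra.mul_one
  mul_comm := FinfCommAlgebra.mul_comm

instance finfAddCommSemigroup : AddCommSemigroup A where
  add := (· + ·)
  add_assoc := FinfModule.add_assoc
  add_comm := FinfModule.add_comm

@[simp] lemma finf_add_idem (a : A) : a + a = a := FinfModule.add_idem a

@[simp] lemma finf_add_idem_left (a b : A) : a + (a + b) = a + b := by
  rw [← add_assoc, finf_add_idem]

@[simp] lemma finf_zero_add_s12 (a : A) : (0 : A) + a = 0 := by
  calc (0 : A) + a = a + -a + a := by rw [FinfModule.add_neg]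
    _ = a + a + -a := by ac_rfl
    _ = a + -a := by rw [finf_add_idem]
    _ = 0 := FinfModule.add_neg a

@[simp] lemma finf_add_zero_s12 (a : A) : a + (0 : A) = 0 := by
  rw [add_comm, finf_zero_add_s12]

lemma apow_eq_pow (x : A) (j : ℕ) (hj : 1 ≤ j) : apow x j = x ^ j := by
  obtain ⟨i, rfl⟩ : ∃ i, j = i + 1 := ⟨j - 1, by omega⟩
  clear hj
  induction i with
  | zero => simp [apow, pow_one]
  | succ i ih =>
      show x * apow x (i + 1) = x ^ (i + 1 + 1)
      rw [ih, ← pow_succ']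

variable (C : FinfCong A)

lemma rel_add_left {a b : A} (c : A) (h : C.rel a b) : C.rel (c + a) (c + b) := by
  have := C.add_compat c h
  rwa [add_comm a c, add_comm b c] at this

lemma rel_mul_left {a b : A} (c : A) (h : C.rel a b) : C.rel (c * a) (c * b) := by
  have := C.mul_compat c h
  rwa [mul_comm a c, mul_comm b c] at this

/-- if `1+u ~ 1` and `1+v ~ 1` then `1+(u+v) ~ 1`. -/
lemma rel_one_add_add {u v : A} (hu : C.rel (1 + u) 1) (hv : C.rel (1 + v) 1) :
    C.rel (1 + (u + v)) 1 := by
  have h1 : C.rel (1 + u + v) (1 + v) := C.add_compat v hu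
  rw [add_assoc] at h1
  exact C.trans h1 hv

variable (x : A)

lemma R_add {p q : ℕ} (hp : C.rel (1 + x ^ p) 1) (hq : C.rel (1 + x ^ q) 1) :
    C.rel (1 + x ^ (p + q)) 1 := by
  have h1 : C.rel ((1 + x ^ p) * x ^ q) (1 * x ^ q) := C.mul_compat _ hp
  rw [FinfAlgebra.right_distrib, one_mul, ← pow_add] at h1
  -- h1 : x^q + x^(p+q) ~ x^q
  have h2 : C.rel (1 + (x ^ q + x ^ (p + q))) (1 + x ^ q) := rel_add_left C 1 h1
  have h3 : C.rel (1 + (x ^ q + x ^ (p + q))) 1 := C.trans h2 hq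
  have h4 : C.rel (1 + x ^ q + x ^ (p + q)) (1 + x ^ (p + q)) := C.add_compat _ hq
  rw [add_assoc] at h4
  exact C.trans (C.symm h4) h3

lemma R_nsmul {p : ℕ} (hp : C.rel (1 + x ^ p) 1) : ∀ j, C.rel (1 + x ^ (j * p)) 1
  | 0 => by simpa using C.refl 1
  | j + 1 => by
      have := R_add C x (R_nsmul hp j) hp
      rwa [← Nat.succ_mul] at this

/-- partial geometric sums `1 + x^k + x^(2k) + ... + x^(tk)` -/
def Spow (x : A) (k : ℕ) : ℕ → A
  | 0 => 1
  | t + 1 => Spow x k t + x ^ ((t + 1) * k)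

lemma S_absorb {e : ℕ} (he : C.rel (1 + x ^ e) 1) (k : ℕ) :
    ∀ t, C.rel (Spow x k t + x ^ e) (Spow x k t)
  | 0 => he
  | t + 1 => by
      have ih := S_absorb he k t
      have h := C.add_compat (x ^ ((t + 1) * k)) ih
      show C.rel (Spow x k t + x ^ ((t + 1) * k) + x ^ e) (Spow x k t + x ^ ((t + 1) * k))
      rwa [add_right_comm]

lemma one_add_mul_S (k c : ℕ) :
    ∀ t, (∀ j, j ≤ t → C.rel (1 + x ^ (c + j * k)) 1) →
      C.rel (1 + x ^ c * Spow x k t) 1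
  | 0, h => by simpa [Spow] using h 0 (Nat.zero_le 0)
  | t + 1, h => by
      have ih := one_add_mul_S k c t fun j hj => h j (Nat.le_succ_of_le hj)
      have h2 : C.rel (1 + x ^ (c + (t + 1) * k)) 1 := h (t + 1) le_rfl
      have key := rel_one_add_add C ih h2
      show C.rel (1 + x ^ c * (Spow x k t + x ^ ((t + 1) * k))) 1
      rwa [FinfAlgebra.left_distrib, ← pow_add]

lemma rel_one_zero_absurd (h10 : C.rel 1 0) (hproper : FinfProper C) : False := by
  obtain ⟨a, b, hab⟩ := hproper
  have ha : C.rel a 0 := by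
    have := C.mul_compat a h10
    rwa [FinfUnitalAlgebra.one_mul, FinfAlgebra.zero_mul] at this
  have hb : C.rel b 0 := by
    have := C.mul_compat b h10
    rwa [FinfUnitalAlgebra.one_mul, FinfAlgebra.zero_mul] at this
  exact hab (C.trans ha (C.symm hb))

lemma S_zero_absurd {n m k : ℕ} (hnk : n = m + k)
    (hn : C.rel (1 + x ^ n) 1) (hm : C.rel (1 + x ^ m) 1)
    (hproper : FinfProper C) (s : ℕ) (h0 : C.rel (Spow x k s) 0) : False := by
  have hexp : ∀ j, j ≤ s → C.rel (1 + x ^ (s * m + j * k)) 1 := by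
    intro j hj
    obtain ⟨d, rfl⟩ : ∃ d, s = j + d := ⟨s - j, by omega⟩
    have h1 : C.rel (1 + x ^ (j * n + d * m)) 1 :=
      R_add C x (R_nsmul C x hn j) (R_nsmul C x hm d)
    have he : j * n + d * m = (j + d) * m + j * k := by subst hnk; ring
    rwa [he] at h1
  have h2 : C.rel (1 + x ^ (s * m) * Spow x k s) 1 := one_add_mul_S C x k (s * m) s hexp
  have h3 : C.rel (x ^ (s * m) * Spow x k s) 0 := by
    have := rel_mul_left C (x ^ (s * m)) h0
    rwa [FinfAlgebra.mul_zero] at this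
  have h4 : C.rel (1 + x ^ (s * m) * Spow x k s) 0 := by
    have := rel_add_left C 1 h3
    rwa [finf_add_zero_s12] at this
  exact rel_one_zero_absurd C (C.trans (C.symm h2) h4) hproper

lemma S_add_self (k : ℕ) : ∀ t d, Spow x k (t + d) + Spow x k t = Spow x k (t + d)
  | t, 0 => finf_add_idem _
  | t, d + 1 => by
      show Spow x k (t + d) + x ^ ((t + d + 1) * k) + Spow x k t
          = Spow x k (t + d) + x ^ ((t + d + 1) * k)
      rw [add_right_comm, S_add_self k t d]

lemma mul_S (k : ℕ) : ∀ t, (1 + x ^ k) * Spow x k t = Spow x k (t + 1)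
  | 0 => by
      show (1 + x ^ k) * 1 = 1 + x ^ (1 * k)
      rw [mul_one, one_mul]
  | t + 1 => by
      show (1 + x ^ k) * (Spow x k t + x ^ ((t + 1) * k))
          = Spow x k (t + 1) + x ^ ((t + 2) * k)
      rw [FinfAlgebra.left_distrib, mul_S k t, FinfAlgebra.right_distrib, one_mul,
        ← pow_add]
      have he : k + (t + 1) * k = (t + 2) * k := by ring
      rw [he]
      show Spow x k t + x ^ ((t + 1) * k) + (x ^ ((t + 1) * k) + x ^ ((t + 2) * k))
          = Spow x k t + x ^ ((t + 1) * k) + x ^ ((t + 2) * k)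
      rw [← add_assoc, add_assoc (Spow x k t), finf_add_idem]

lemma descent {n m k : ℕ} (hnk : n = m + k)
    (hn : C.rel (1 + x ^ n) 1) (hm : C.rel (1 + x ^ m) 1)
    (hprime : FinfPrime C) :
    ∀ t, C.rel (Spow x k (t + 1)) (Spow x k t) → C.rel (1 + x ^ k) 1
  | 0, h => by
      have : Spow x k 1 = 1 + x ^ k := by
        show (1 : A) + x ^ (1 * k) = 1 + x ^ k
        rw [one_mul]
      rwa [this] at h
  | t + 1, h => by
      have E1 : (1 + x ^ k) * Spow x k (t + 1) + 1 * Spow x k t = Spow x k (t + 2) := by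
        rw [mul_S, one_mul]
        exact S_add_self x k t 2
      have E2 : (1 + x ^ k) * Spow x k t + 1 * Spow x k (t + 1) = Spow x k (t + 1) := by
        rw [mul_S, one_mul, finf_add_idem]
      have h' : C.rel ((1 + x ^ k) * Spow x k (t + 1) + 1 * Spow x k t)
          ((1 + x ^ k) * Spow x k t + 1 * Spow x k (t + 1)) := by
        rw [E1, E2]; exact h
      rcases hprime.2.1 _ _ _ _ h' with hgoal | hstep | hz1 | hz2
      · exact hgoal
      · exact descent hnk hn hm hprime t hstep
      · rw [E1] at hz1
        exact absurd hz1 (fun hz => S_zero_absurd C x hnk hn hm hprime.1 _ hz)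
      · rw [E2] at hz2
        exact absurd hz2 (fun hz => S_zero_absurd C x hnk hn hm hprime.1 _ hz)

end Aux

theorem stmt12 {A : Type*} [FinfCommAlgebra A] (C : FinfCong A)
    (x : A) (n m : ℕ) (hm1 : 1 ≤ m) (hnm : m < n)
    (hn : C.rel (1 + apow x n) 1) (hm : C.rel (1 + apow x m) 1) :
    C.rel (1 + apow x (n + m)) 1 ∧
      (FinfPrime C → C.rel (1 + apow x (n - m)) 1) := by
  rw [apow_eq_pow x n (by omega)] at hn
  rw [apow_eq_pow x m (by omega)] at hm
  constructor
  · rw [apow_eq_pow x (n + m) (by omega)]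
    exact R_add C x hn hm
  · intro hprime
    rw [apow_eq_pow x (n - m) (by omega)]
    set k := n - m with hk
    have hnk : n = m + k := by omega
    -- base: Spow x k n ~ Spow x k (n-1)
    obtain ⟨t, hnt⟩ : ∃ t, n = t + 1 := ⟨n - 1, by omega⟩
    have hbase : C.rel (Spow x k (t + 1)) (Spow x k t) := by
      show C.rel (Spow x k t + x ^ ((t + 1) * k)) (Spow x k t)
      apply S_absorb
      have := R_nsmul C x hn k
      rwa [show k * n = (t + 1) * k by rw [Nat.mul_comm, hnt]] at this
    exact descent C x hnk hn hm hprime t hbase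
end

section
/- Let A be a commutative F∞-algebra and C a cancellative congruence on A. Then C is radical: whenever (a² + b², ab) ∈ C, then (a, b) ∈ C or (a² + b², 0) ∈ C or (ab, 0) ∈ C. -/
def FinfCancellative {A : Type*} [FinfAlgebra A] (C : FinfCong A) : Prop :=
  ∀ a b c : A, C.rel (a * b) (a * c) → C.rel a 0 ∨ C.rel b c

theorem stmt13 {A : Type*} [FinfAlgebra A] (hcomm : ∀ a b : A, a * b = b * a)
    (C : FinfCong A) (hC : FinfCancellative C) :
    ∀ a b : A, C.rel (a * a + b * b) (a * b) →
      C.rel a b ∨ C.rel (a * a + b * b) 0 ∨ C.rel (a * b) 0 := by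
  intro a b h
  have aa := FinfModule.add_assoc (M := A)
  have ac := FinfModule.add_comm (M := A)
  have ai := FinfModule.add_idem (M := A)
  have eqA : (a*a+b*b) + a*a = a*a+b*b := by
    rw [ac (a*a+b*b) (a*a), ← aa, ai]
  have eqB : (a*a+b*b) + b*b = a*a+b*b := by
    rw [aa, ai]
  have eqC : (a+b)*a = a*b + a*a := by
    rw [FinfAlgebra.right_distrib, hcomm b a, ac]
  have eqD : (a+b)*b = a*b + b*b := by
    rw [FinfAlgebra.right_distrib]
  have h1 : C.rel (a*a+b*b) ((a+b)*a) := by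
    have := C.add_compat (a*a) h
    rw [eqA] at this
    rw [eqC]; exact this
  have h2 : C.rel (a*a+b*b) ((a+b)*b) := by
    have := C.add_compat (b*b) h
    rw [eqB] at this
    rw [eqD]; exact this
  have h3 : C.rel ((a+b)*a) ((a+b)*b) := C.trans (C.symm h1) h2
  rcases hC (a+b) a b h3 with ht | hab
  · right; left
    have h4 : C.rel ((a+b)*(a+b)) 0 := by
      have := C.mul_compat (a+b) ht
      rwa [FinfAlgebra.zero_mul] at this
    have eqE : (a+b)*(a+b) = a*b + (a*a+b*b) := by
      rw [FinfAlgebra.right_distrib, FinfAlgebra.left_distrib, FinfAlgebra.left_distrib,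
        hcomm b a, aa, ← aa (a*b), ai, ← aa, ac (a*a), aa]
    have h5 : C.rel (a*a+b*b) (a*b + (a*a+b*b)) := by
      have := C.add_compat (a*a+b*b) h
      rw [ai] at this
      exact this
    exact C.trans h5 (by rw [← eqE]; exact h4)
  · left; exact hab
end

section
/- Let A be a unital commutative F∞-algebra and C a cancellative congruence on A. Then A/C embeds into an F∞-field: there exist an F∞-field F and a map φ : A → F with φ(0) = 0, φ(1) = 1, φ(-a) = -φ(a), φ(a+b) = φ(a) + φ(b), φ(ab) = φ(a)·φ(b) for all a, b ∈ A, and such that φ(a) = φ(b) if and only if (a, b) ∈ C. -/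
universe u

namespace Stmt16Aux

variable {A : Type u} [FinfCommAlgebra A]

lemma mulA (a b c : A) : a * b * c = a * (b * c) := FinfAlgebra.mul_assoc a b c
lemma mulC (a b : A) : a * b = b * a := FinfCommAlgebra.mul_comm a b
lemma mulLC (a b c : A) : a * (b * c) = b * (a * c) := by
  rw [← mulA, mulC a b, mulA]
lemma addA (a b c : A) : a + b + c = a + (b + c) := FinfModule.add_assoc a b c
lemma addC (a b : A) : a + b = b + a := FinfModule.add_comm a b
lemma addLC (a b c : A) : a + (b + c) = b + (a + c) := by
  rw [← addA, addC a b, addA]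
lemma addI (a : A) : a + a = a := FinfModule.add_idem a
lemma addN (a : A) : a + -a = 0 := FinfModule.add_neg a
lemma negAdd (a b : A) : -(a + b) = -a + -b := FinfModule.neg_add a b
lemma negNeg (a : A) : - -a = a := FinfModule.neg_neg a
lemma mulZ (a : A) : a * 0 = 0 := FinfAlgebra.mul_zero a
lemma zMul (a : A) : 0 * a = 0 := FinfAlgebra.zero_mul a
lemma negMul (a b : A) : -a * b = -(a * b) := FinfAlgebra.neg_mul a b
lemma mulNeg (a b : A) : a * -b = -(a * b) := FinfAlgebra.mul_neg a b
lemma ldist (a b c : A) : a * (b + c) = a * b + a * c := FinfAlgebra.left_distrib a b c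
lemma rdist (a b c : A) : (a + b) * c = a * c + b * c := FinfAlgebra.right_distrib a b c
lemma mulOne (a : A) : a * 1 = a := FinfUnitalAlgebra.mul_one a
lemma oneMul (a : A) : 1 * a = a := FinfUnitalAlgebra.one_mul a
lemma zeroAdd (a : A) : (0 : A) + a = 0 := by
  rw [← addN a, addA, addC (-a) a, ← addA, addI]
lemma addZero (a : A) : a + (0 : A) = 0 := by rw [addC, zeroAdd]

variable (C : FinfCong A)

lemma rel_of_eq {x y : A} (h : x = y) : C.rel x y := h ▸ C.refl x

lemma rel_mul₂ {x y z w : A} (h1 : C.rel x y) (h2 : C.rel z w) :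
    C.rel (x * z) (y * w) := by
  have h3 := C.mul_compat y h2
  rw [mulC z y, mulC w y] at h3
  exact C.trans (C.mul_compat z h1) h3

lemma rel_add₂ {x y z w : A} (h1 : C.rel x y) (h2 : C.rel z w) :
    C.rel (x + z) (y + w) := by
  have h3 := C.add_compat y h2
  rw [addC z y, addC w y] at h3
  exact C.trans (C.add_compat z h1) h3

def S := {s : A // ¬ C.rel s 0}

variable (hC : FinfCancellative C)

def frSetoid : Setoid (A × S C) where
  r p q := C.rel (p.1 * q.2.1) (q.1 * p.2.1)
  iseqv := by
    constructor
    · intro p; exact C.refl _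
    · intro p q h; exact C.symm h
    · rintro ⟨a, s⟩ ⟨b, t⟩ ⟨c, u⟩ h1 h2
      simp only at h1 h2 ⊢
      have h3 := C.mul_compat u.1 h1
      have h4 := C.mul_compat s.1 h2
      have e1 : a * t.1 * u.1 = t.1 * (a * u.1) := by
        rw [mulC a t.1, mulA]
      have e2 : b * s.1 * u.1 = b * u.1 * s.1 := by
        rw [mulA, mulC s.1 u.1, ← mulA]
      have e3 : c * t.1 * s.1 = t.1 * (c * s.1) := by
        rw [mulC c t.1, mulA]
      rw [e1, e2] at h3
      rw [e3] at h4
      rcases hC t.1 (a * u.1) (c * s.1) (C.trans h3 h4) with h | h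
      · exact absurd h t.2
      · exact h

def Fq : Type u := Quotient (frSetoid C hC)

def mkq (p : A × S C) : Fq C hC := Quotient.mk (frSetoid C hC) p

include hC in
lemma Smul (s t : S C) : ¬ C.rel (s.1 * t.1) 0 := by
  intro h
  have h' : C.rel (s.1 * t.1) (s.1 * 0) := by rw [mulZ]; exact h
  rcases hC s.1 t.1 0 h' with h2 | h2
  · exact s.2 h2
  · exact t.2 h2

def fmul : Fq C hC → Fq C hC → Fq C hC :=
  Quotient.lift₂
    (fun p q => mkq C hC (p.1 * q.1, ⟨p.2.1 * q.2.1, Smul C hC p.2 q.2⟩))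
    (by
      rintro ⟨a, s⟩ ⟨b, t⟩ ⟨a', s'⟩ ⟨b', t'⟩ hp hq
      apply Quotient.sound
      have h := rel_mul₂ C hp hq
      show C.rel (a * b * (s'.1 * t'.1)) (a' * b' * (s.1 * t.1))
      have e1 : a * b * (s'.1 * t'.1) = a * s'.1 * (b * t'.1) := by
        simp [mulA, mulC, mulLC, addA, addC, addLC, addI, addN, negAdd, negNeg, mulZ, zMul, negMul, mulNeg, ldist, rdist, mulOne, oneMul, zeroAdd, addZero]
      have e2 : a' * b' * (s.1 * t.1) = a' * s.1 * (b' * t.1) := by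
        simp [mulA, mulC, mulLC, addA, addC, addLC, addI, addN, negAdd, negNeg, mulZ, zMul, negMul, mulNeg, ldist, rdist, mulOne, oneMul, zeroAdd, addZero]
      rw [e1, e2]; exact h)

def fadd : Fq C hC → Fq C hC → Fq C hC :=
  Quotient.lift₂
    (fun p q => mkq C hC (p.1 * q.2.1 + q.1 * p.2.1, ⟨p.2.1 * q.2.1, Smul C hC p.2 q.2⟩))
    (by
      rintro ⟨a, s⟩ ⟨b, t⟩ ⟨a', s'⟩ ⟨b', t'⟩ hp hq
      apply Quotient.sound
      show C.rel ((a * t.1 + b * s.1) * (s'.1 * t'.1))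
        ((a' * t'.1 + b' * s'.1) * (s.1 * t.1))
      have h3 := C.mul_compat (t.1 * t'.1) hp
      have h4 := C.mul_compat (s.1 * s'.1) hq
      have h5 := rel_add₂ C h3 h4
      have e1 : (a * t.1 + b * s.1) * (s'.1 * t'.1)
          = a * s'.1 * (t.1 * t'.1) + b * t'.1 * (s.1 * s'.1) := by
        simp [mulA, mulC, mulLC, addA, addC, addLC, addI, addN, negAdd, negNeg, mulZ, zMul, negMul, mulNeg, ldist, rdist, mulOne, oneMul, zeroAdd, addZero]
      have e2 : (a' * t'.1 + b' * s'.1) * (s.1 * t.1)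
          = a' * s.1 * (t.1 * t'.1) + b' * t.1 * (s.1 * s'.1) := by
        simp [mulA, mulC, mulLC, addA, addC, addLC, addI, addN, negAdd, negNeg, mulZ, zMul, negMul, mulNeg, ldist, rdist, mulOne, oneMul, zeroAdd, addZero]
      rw [e1, e2]; exact h5)

def fneg : Fq C hC → Fq C hC :=
  Quotient.lift (fun p => mkq C hC (-p.1, p.2))
    (by
      rintro ⟨a, s⟩ ⟨b, t⟩ h
      apply Quotient.sound
      show C.rel (-a * t.1) (-b * s.1)
      rw [negMul, negMul]
      exact C.neg_compat h)

variable (h1 : ¬ C.rel 1 0)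

def sone : S C := ⟨1, h1⟩

def finst : FinfCommAlgebra (Fq C hC) where
  zero := mkq C hC (0, sone C h1)
  one := mkq C hC (1, sone C h1)
  neg := fneg C hC
  add := fadd C hC
  mul := fmul C hC
  add_assoc := by
    intro x y z
    induction x, y, z using Quotient.inductionOn₃ with
    | _ p q r =>
      apply Quotient.sound
      apply rel_of_eq
      simp [mulA, mulC, mulLC, addA, addC, addLC, addI, addN, negAdd, negNeg, mulZ, zMul, negMul, mulNeg, ldist, rdist, mulOne, oneMul, zeroAdd, addZero, sone]
  add_comm := by
    intro x y
    induction x, y using Quotient.inductionOn₂ with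
    | _ p q =>
      apply Quotient.sound
      apply rel_of_eq
      simp [mulA, mulC, mulLC, addA, addC, addLC, addI, addN, negAdd, negNeg, mulZ, zMul, negMul, mulNeg, ldist, rdist, mulOne, oneMul, zeroAdd, addZero, sone]
  add_idem := by
    intro x
    induction x using Quotient.inductionOn with
    | _ p =>
      apply Quotient.sound
      apply rel_of_eq
      simp [mulA, mulC, mulLC, addA, addC, addLC, addI, addN, negAdd, negNeg, mulZ, zMul, negMul, mulNeg, ldist, rdist, mulOne, oneMul, zeroAdd, addZero, sone]
  add_neg := by
    intro x
    induction x using Quotient.inductionOn with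
    | _ p =>
      apply Quotient.sound
      apply rel_of_eq
      simp [mulA, mulC, mulLC, addA, addC, addLC, addI, addN, negAdd, negNeg, mulZ, zMul, negMul, mulNeg, ldist, rdist, mulOne, oneMul, zeroAdd, addZero, sone]
  neg_add := by
    intro x y
    induction x, y using Quotient.inductionOn₂ with
    | _ p q =>
      apply Quotient.sound
      apply rel_of_eq
      simp [mulA, mulC, mulLC, addA, addC, addLC, addI, addN, negAdd, negNeg, mulZ, zMul, negMul, mulNeg, ldist, rdist, mulOne, oneMul, zeroAdd, addZero, sone]
  neg_neg := by
    intro x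
    induction x using Quotient.inductionOn with
    | _ p =>
      apply Quotient.sound
      apply rel_of_eq
      simp [mulA, mulC, mulLC, addA, addC, addLC, addI, addN, negAdd, negNeg, mulZ, zMul, negMul, mulNeg, ldist, rdist, mulOne, oneMul, zeroAdd, addZero, sone]
  mul_assoc := by
    intro x y z
    induction x, y, z using Quotient.inductionOn₃ with
    | _ p q r =>
      apply Quotient.sound
      apply rel_of_eq
      simp [mulA, mulC, mulLC, addA, addC, addLC, addI, addN, negAdd, negNeg, mulZ, zMul, negMul, mulNeg, ldist, rdist, mulOne, oneMul, zeroAdd, addZero, sone]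
  mul_zero := by
    intro x
    induction x using Quotient.inductionOn with
    | _ p =>
      apply Quotient.sound
      apply rel_of_eq
      simp [mulA, mulC, mulLC, addA, addC, addLC, addI, addN, negAdd, negNeg, mulZ, zMul, negMul, mulNeg, ldist, rdist, mulOne, oneMul, zeroAdd, addZero, sone]
  zero_mul := by
    intro x
    induction x using Quotient.inductionOn with
    | _ p =>
      apply Quotient.sound
      apply rel_of_eq
      simp [mulA, mulC, mulLC, addA, addC, addLC, addI, addN, negAdd, negNeg, mulZ, zMul, negMul, mulNeg, ldist, rdist, mulOne, oneMul, zeroAdd, addZero, sone]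
  neg_mul := by
    intro x y
    induction x, y using Quotient.inductionOn₂ with
    | _ p q =>
      apply Quotient.sound
      apply rel_of_eq
      simp [mulA, mulC, mulLC, addA, addC, addLC, addI, addN, negAdd, negNeg, mulZ, zMul, negMul, mulNeg, ldist, rdist, mulOne, oneMul, zeroAdd, addZero, sone]
  mul_neg := by
    intro x y
    induction x, y using Quotient.inductionOn₂ with
    | _ p q =>
      apply Quotient.sound
      apply rel_of_eq
      simp [mulA, mulC, mulLC, addA, addC, addLC, addI, addN, negAdd, negNeg, mulZ, zMul, negMul, mulNeg, ldist, rdist, mulOne, oneMul, zeroAdd, addZero, sone]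
  left_distrib := by
    intro x y z
    induction x, y, z using Quotient.inductionOn₃ with
    | _ p q r =>
      apply Quotient.sound
      apply rel_of_eq
      simp [mulA, mulC, mulLC, addA, addC, addLC, addI, addN, negAdd, negNeg, mulZ, zMul, negMul, mulNeg, ldist, rdist, mulOne, oneMul, zeroAdd, addZero, sone]
  right_distrib := by
    intro x y z
    induction x, y, z using Quotient.inductionOn₃ with
    | _ p q r =>
      apply Quotient.sound
      apply rel_of_eq
      simp [mulA, mulC, mulLC, addA, addC, addLC, addI, addN, negAdd, negNeg, mulZ, zMul, negMul, mulNeg, ldist, rdist, mulOne, oneMul, zeroAdd, addZero, sone]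
  one_mul := by
    intro x
    induction x using Quotient.inductionOn with
    | _ p =>
      apply Quotient.sound
      apply rel_of_eq
      simp [mulA, mulC, mulLC, addA, addC, addLC, addI, addN, negAdd, negNeg, mulZ, zMul, negMul, mulNeg, ldist, rdist, mulOne, oneMul, zeroAdd, addZero, sone]
  mul_one := by
    intro x
    induction x using Quotient.inductionOn with
    | _ p =>
      apply Quotient.sound
      apply rel_of_eq
      simp [mulA, mulC, mulLC, addA, addC, addLC, addI, addN, negAdd, negNeg, mulZ, zMul, negMul, mulNeg, ldist, rdist, mulOne, oneMul, zeroAdd, addZero, sone]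
  mul_comm := by
    intro x y
    induction x, y using Quotient.inductionOn₂ with
    | _ p q =>
      apply Quotient.sound
      apply rel_of_eq
      simp [mulA, mulC, mulLC, addA, addC, addLC, addI, addN, negAdd, negNeg, mulZ, zMul, negMul, mulNeg, ldist, rdist, mulOne, oneMul, zeroAdd, addZero, sone]

end Stmt16Aux

instance : FinfCommAlgebra PUnit.{u+1} where
  zero := ⟨⟩
  one := ⟨⟩
  neg _ := ⟨⟩
  add _ _ := ⟨⟩
  mul _ _ := ⟨⟩
  add_assoc _ _ _ := rfl
  add_comm _ _ := rfl
  add_idem _ := rfl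
  add_neg _ := rfl
  neg_add _ _ := rfl
  neg_neg _ := rfl
  mul_assoc _ _ _ := rfl
  mul_zero _ := rfl
  zero_mul _ := rfl
  neg_mul _ _ := rfl
  mul_neg _ _ := rfl
  left_distrib _ _ _ := rfl
  right_distrib _ _ _ := rfl
  one_mul _ := rfl
  mul_one _ := rfl
  mul_comm _ _ := rfl


theorem stmt16 {A : Type u} [FinfCommAlgebra A] (C : FinfCong A)
    (hC : FinfCancellative C) :
    ∃ (F : Type u) (_ : FinfCommAlgebra F),
      (∀ a : F, a ≠ 0 → ∃ b : F, a * b = 1) ∧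
      ∃ φ : A → F, φ 0 = 0 ∧ φ 1 = 1 ∧ (∀ a : A, φ (-a) = -(φ a)) ∧
        (∀ a b : A, φ (a + b) = φ a + φ b) ∧
        (∀ a b : A, φ (a * b) = φ a * φ b) ∧
        ∀ a b : A, φ a = φ b ↔ C.rel a b := by
  classical
  by_cases h1 : C.rel 1 0
  · have hall : ∀ a : A, C.rel a 0 := by
      intro a
      have h := C.mul_compat a h1
      rwa [Stmt16Aux.oneMul, Stmt16Aux.zMul] at h
    refine ⟨PUnit.{u+1}, inferInstance, ?_, fun _ => ⟨⟩, rfl, rfl, fun _ => rfl,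
      fun _ _ => rfl, fun _ _ => rfl, ?_⟩
    · intro a ha
      exact absurd (Subsingleton.elim a 0) ha
    · intro a b
      constructor
      · intro _
        exact C.trans (hall a) (C.symm (hall b))
      · intro _
        rfl
  · refine ⟨Stmt16Aux.Fq C hC, Stmt16Aux.finst C hC h1, ?_,
      fun a => Stmt16Aux.mkq C hC (a, Stmt16Aux.sone C h1), ?_, ?_, ?_, ?_, ?_, ?_⟩
    · intro x hx
      induction x using Quotient.inductionOn with
      | _ p =>
        obtain ⟨a, s⟩ := p
        by_cases ha : C.rel a 0
        · exfalso
          apply hx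
          apply Quotient.sound
          show C.rel (a * 1) (0 * s.1)
          rw [Stmt16Aux.mulOne, Stmt16Aux.zMul]
          exact ha
        · refine ⟨Stmt16Aux.mkq C hC (s.1, ⟨a, ha⟩), ?_⟩
          apply Quotient.sound
          show C.rel (a * s.1 * 1) (1 * (s.1 * a))
          apply Stmt16Aux.rel_of_eq
          simp [Stmt16Aux.mulOne, Stmt16Aux.oneMul, Stmt16Aux.mulC]
    · rfl
    · rfl
    · intro a
      rfl
    · intro a b
      apply Quotient.sound
      show C.rel ((a + b) * (1 * 1)) ((a * 1 + b * 1) * 1)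
      apply Stmt16Aux.rel_of_eq
      simp [Stmt16Aux.mulOne, Stmt16Aux.oneMul]
    · intro a b
      apply Quotient.sound
      show C.rel ((a * b) * (1 * 1)) ((a * b) * 1)
      apply Stmt16Aux.rel_of_eq
      simp [Stmt16Aux.mulOne, Stmt16Aux.oneMul]
    · intro a b
      constructor
      · intro h
        have h2 : C.rel (a * 1) (b * 1) := Quotient.exact h
        rwa [Stmt16Aux.mulOne, Stmt16Aux.mulOne] at h2
      · intro h
        apply Quotient.sound
        show C.rel (a * 1) (b * 1)
        rw [Stmt16Aux.mulOne, Stmt16Aux.mulOne]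
        exact h
end
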